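/- Let G be a finite group, N ⊴ G, and P a p-subgroup of G such that P ∩ N is a Sylow p-subgroup of N. If h ∈ G is such that hN centralizes PN/N in G/N, then there exists n ∈ N with P^{hn} = P; in particular hn lies in C_{P,N} := { g ∈ G : [g,P] ⊆ P ∩ N }. -/

import Mathlib

open scoped Pointwise

open scoped commutatorElement

/-- A `p`-subgroup whose index is not divisible by `p` is a Sylow subgroup. -/
private lemma sylow_of_not_dvd_index {K : Type*} [Group K] [Finite K] {p : ℕ} [Fact p.Prime]
    {H : Subgroup K} (hH : IsPGroup p H) (hind : ¬ p ∣ H.index) :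
    ∃ Q : Sylow p K, (Q : Subgroup K) = H := by
  obtain ⟨Q, hQ⟩ := hH.exists_le_sylow
  refine ⟨Q, le_antisymm ?_ hQ⟩
  have h1 : H.relIndex Q * (Q : Subgroup K).index = H.index :=
    Subgroup.relIndex_mul_index hQ
  have hrel_dvd : H.relIndex Q ∣ Nat.card Q :=
    Subgroup.index_dvd_card (H.subgroupOf Q)
  obtain ⟨n, hn⟩ := IsPGroup.iff_card.mp Q.isPGroup'
  have hnd : ¬ p ∣ H.relIndex Q := fun hd => hind (h1 ▸ Dvd.dvd.mul_right hd _)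
  have hone : H.relIndex Q = 1 := by
    obtain ⟨k, _, hek⟩ := (Nat.dvd_prime_pow Fact.out).mp (hn ▸ hrel_dvd)
    rcases k with _ | k
    · simpa using hek
    · exact absurd (hek ▸ dvd_pow_self p k.succ_ne_zero) hnd
  exact Subgroup.relIndex_eq_one.mp hone

/-- Let `G` be a finite group, `N ⊴ G`, and `P` a `p`-subgroup of `G` such that `P ⊓ N` is a
Sylow `p`-subgroup of `N`. If `h ∈ G` is such that `hN` centralizes `PN/N` in `G/N`
(i.e. all commutators `⁅h, x⁆` with `x ∈ P` lie in `N`), then there exists `n ∈ N` with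
`P^{hn} = P`; in particular `hn` lies in `C_{P,N} = {g : [g,P] ⊆ P ∩ N}`. -/
theorem stmt_2 {G : Type*} [Group G] [Finite G] (p : ℕ) [Fact p.Prime]
    (N P : Subgroup G) [N.Normal] (hP : IsPGroup p P)
    (hSyl : ∃ S : Sylow p N, (S : Subgroup N) = (P ⊓ N).subgroupOf N)
    (h : G) (hcent : ∀ x ∈ P, ⁅h, x⁆ ∈ N) :
    ∃ n ∈ N, P.map (MulAut.conj (h * n)⁻¹).toMonoidHom = P ∧
      ∀ x ∈ P, ⁅h * n, x⁆ ∈ P ⊓ N := by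
  obtain ⟨S, hS⟩ := hSyl
  set K : Subgroup G := P ⊔ N with hKdef
  have hPK : P ≤ K := le_sup_left
  have hNK : N ≤ K := le_sup_right
  set Ph : Subgroup G := P.map (MulAut.conj h⁻¹).toMonoidHom with hPhdef
  have memPh : ∀ z : G, z ∈ Ph ↔ h * z * h⁻¹ ∈ P := by
    intro z
    rw [hPhdef, Subgroup.mem_map_equiv, MulAut.conj_symm_apply, inv_inv]
  -- Ph ≤ K
  have hPhK : Ph ≤ K := by
    intro z hz
    have hw : h * z * h⁻¹ ∈ P := (memPh z).mp hz
    have hn2 : (h * z * h⁻¹)⁻¹ * h⁻¹ * (h * z * h⁻¹) * h ∈ N := by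
      have t := Subgroup.Normal.conj_mem ‹N.Normal› _
        (hcent (h * z * h⁻¹)⁻¹ (inv_mem hw)) h⁻¹
      have e : h⁻¹ * ⁅h, (h * z * h⁻¹)⁻¹⁆ * h⁻¹⁻¹
          = (h * z * h⁻¹)⁻¹ * h⁻¹ * (h * z * h⁻¹) * h := by
        simp only [commutatorElement_def]; group
      rwa [e] at t
    have e2 : z = (h * z * h⁻¹) * ((h * z * h⁻¹)⁻¹ * h⁻¹ * (h * z * h⁻¹) * h) := by group
    rw [e2]
    exact mul_mem (hPK hw) (hNK hn2)
  -- cardinalities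
  have hdpos : 0 < Nat.card ↥(P ⊓ N) := Nat.card_pos
  have cP : Nat.card ↥(P.subgroupOf K) = Nat.card ↥P :=
    Nat.card_congr (Subgroup.subgroupOfEquivOfLe hPK).toEquiv
  have cN : Nat.card ↥(N.subgroupOf K) = Nat.card ↥N :=
    Nat.card_congr (Subgroup.subgroupOfEquivOfLe hNK).toEquiv
  have cS : Nat.card ↥(S : Subgroup ↥N) = Nat.card ↥(P ⊓ N) := by
    rw [hS]
    exact Nat.card_congr (Subgroup.subgroupOfEquivOfLe inf_le_right).toEquiv
  have cNP : Nat.card ↥(N.subgroupOf P) = Nat.card ↥(P ⊓ N) := by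
    rw [← Subgroup.inf_subgroupOf_right N P, inf_comm]
    exact Nat.card_congr (Subgroup.subgroupOfEquivOfLe inf_le_left).toEquiv
  -- Lagrange relations
  have L1 : Nat.card ↥P * (P.subgroupOf K).index = Nat.card ↥K := by
    rw [← cP]; exact Subgroup.card_mul_index (P.subgroupOf K)
  have L2 : Nat.card ↥(P ⊓ N) * (S : Subgroup ↥N).index = Nat.card ↥N := by
    rw [← cS]; exact Subgroup.card_mul_index (S : Subgroup ↥N)
  have L3 : Nat.card ↥N * (N.subgroupOf K).index = Nat.card ↥K := by
    rw [← cN]; exact Subgroup.card_mul_index (N.subgroupOf K)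
  have L5 : Nat.card ↥(P ⊓ N) * (N.subgroupOf P).index = Nat.card ↥P := by
    rw [← cNP]; exact Subgroup.card_mul_index (N.subgroupOf P)
  have L4 : (N.subgroupOf K).index = (N.subgroupOf P).index := by
    rw [Subgroup.index, Subgroup.index]
    exact (Nat.card_congr (QuotientGroup.quotientInfEquivProdNormalQuotient P N).toEquiv).symm
  -- conclude (P.subgroupOf K).index = S.index
  have hqpos : 0 < (N.subgroupOf P).index :=
    Nat.pos_of_ne_zero Subgroup.index_ne_zero_of_finite
  have key_index : (P.subgroupOf K).index = (S : Subgroup ↥N).index := by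
    have e1 : (Nat.card ↥(P ⊓ N) * (N.subgroupOf P).index) * (P.subgroupOf K).index
        = (Nat.card ↥(P ⊓ N) * (N.subgroupOf P).index) * (S : Subgroup ↥N).index := by
      have h1 : (Nat.card ↥(P ⊓ N) * (N.subgroupOf P).index) * (P.subgroupOf K).index
          = Nat.card ↥K := by rw [L5]; exact L1
      have h2 : (Nat.card ↥(P ⊓ N) * (S : Subgroup ↥N).index) * (N.subgroupOf P).index
          = Nat.card ↥K := by rw [← L4, L2]; exact L3
      rw [h1, ← h2]; ring
    exact Nat.eq_of_mul_eq_mul_left (Nat.mul_pos hdpos hqpos) e1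
  have hS_ndvd : ¬ p ∣ (S : Subgroup ↥N).index := S.not_dvd_index
  have hiP_ndvd : ¬ p ∣ (P.subgroupOf K).index := key_index ▸ hS_ndvd
  -- Ph facts
  have hPh_pgroup : IsPGroup p Ph := hP.map _
  have cPh : Nat.card ↥Ph = Nat.card ↥P :=
    (Nat.card_congr (Subgroup.equivMapOfInjective P _
      (MulAut.conj h⁻¹).injective).toEquiv).symm
  have cPh' : Nat.card ↥(Ph.subgroupOf K) = Nat.card ↥P := by
    rw [← cPh]; exact Nat.card_congr (Subgroup.subgroupOfEquivOfLe hPhK).toEquiv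
  have hapos : 0 < Nat.card ↥P := Nat.card_pos
  have hiPh_eq : (Ph.subgroupOf K).index = (P.subgroupOf K).index := by
    have e1 : Nat.card ↥P * (Ph.subgroupOf K).index = Nat.card ↥P * (P.subgroupOf K).index := by
      rw [L1, ← cPh']; exact Subgroup.card_mul_index (Ph.subgroupOf K)
    exact Nat.eq_of_mul_eq_mul_left hapos e1
  have hiPh_ndvd : ¬ p ∣ (Ph.subgroupOf K).index := hiPh_eq ▸ hiP_ndvd
  -- both are Sylow subgroups of K
  have hPpg : IsPGroup p (P.subgroupOf K) :=
    hP.of_equiv (Subgroup.subgroupOfEquivOfLe hPK).symm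
  have hPhpg : IsPGroup p (Ph.subgroupOf K) :=
    hPh_pgroup.of_equiv (Subgroup.subgroupOfEquivOfLe hPhK).symm
  obtain ⟨Q1, hQ1⟩ := sylow_of_not_dvd_index hPpg hiP_ndvd
  obtain ⟨Q2, hQ2⟩ := sylow_of_not_dvd_index hPhpg hiPh_ndvd
  obtain ⟨g, hg⟩ := MulAction.exists_smul_eq ↥K Q2 Q1
  -- unfold the conjugation
  have hg' : MulAut.conj g • (Ph.subgroupOf K) = P.subgroupOf K := by
    have := congrArg (fun Q : Sylow p ↥K => (Q : Subgroup ↥K)) hg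
    simpa [Sylow.smul_def, Sylow.pointwise_smul_def, hQ1, hQ2] using this
  have key : ∀ u : G, ∀ hu : u ∈ K, (u ∈ P ↔ (g : G)⁻¹ * u * (g : G) ∈ Ph) := by
    intro u hu
    have h1 : (⟨u, hu⟩ : ↥K) ∈ P.subgroupOf K ↔ (⟨u, hu⟩ : ↥K) ∈ MulAut.conj g • (Ph.subgroupOf K) := by
      rw [hg']
    rw [Subgroup.mem_pointwise_smul_iff_inv_smul_mem] at h1
    have h2 : ((MulAut.conj g)⁻¹ • (⟨u, hu⟩ : ↥K)) = g⁻¹ * ⟨u, hu⟩ * g := by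
      simp [MulAut.smul_def]
    rw [h2] at h1
    simpa [Subgroup.mem_subgroupOf] using h1
  -- decompose g = x * n
  have hgmem : (g : G) ∈ (P : Set G) * (N : Set G) := by
    rw [← Subgroup.mul_normal P N]; exact g.2
  obtain ⟨x, hx, n, hn, hxn⟩ := hgmem
  refine ⟨n⁻¹, inv_mem hn, ?_, ?_⟩
  · -- conjugation statement
    have claimB : ∀ u ∈ P, (h * n⁻¹) * u * (h * n⁻¹)⁻¹ ∈ P := by
      intro u hu
      have hv : x * u * x⁻¹ ∈ P := mul_mem (mul_mem hx hu) (inv_mem hx)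
      have hvK : x * u * x⁻¹ ∈ K := hPK hv
      have := (key _ hvK).mp hv
      rw [memPh] at this
      have e : h * ((g : G)⁻¹ * (x * u * x⁻¹) * (g : G)) * h⁻¹
          = (h * n⁻¹) * u * (h * n⁻¹)⁻¹ := by rw [← hxn]; group
      rwa [e] at this
    have claimA : ∀ u ∈ P, (h * n⁻¹)⁻¹ * u * (h * n⁻¹) ∈ P := by
      intro u hu
      set m : G := h * n⁻¹ with hm
      have hPhmem : h⁻¹ * u * h ∈ Ph := by
        rw [memPh]
        have e : h * (h⁻¹ * u * h) * h⁻¹ = u := by group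
        rwa [e]
      have hvK : (g : G) * (h⁻¹ * u * h) * (g : G)⁻¹ ∈ K :=
        mul_mem (mul_mem g.2 (hPhK hPhmem)) (inv_mem g.2)
      have hv : (g : G) * (h⁻¹ * u * h) * (g : G)⁻¹ ∈ P := by
        rw [key _ hvK]
        have e : (g : G)⁻¹ * ((g : G) * (h⁻¹ * u * h) * (g : G)⁻¹) * (g : G)
            = h⁻¹ * u * h := by group
        rw [e]; exact hPhmem
      have e2 : m⁻¹ * u * m = x⁻¹ * ((g : G) * (h⁻¹ * u * h) * (g : G)⁻¹) * x := by
        rw [← hxn, hm]; group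
      rw [e2]
      exact mul_mem (mul_mem (inv_mem hx) hv) hx
    ext y
    rw [Subgroup.mem_map_equiv, MulAut.conj_symm_apply, inv_inv]
    constructor
    · intro hy
      have := claimA _ hy
      have e : (h * n⁻¹)⁻¹ * (h * n⁻¹ * y * (h * n⁻¹)⁻¹) * (h * n⁻¹) = y := by group
      rwa [e] at this
    · intro hy
      exact claimB _ hy
  · -- commutator statement
    intro x' hx'
    rw [Subgroup.mem_inf]
    refine ⟨?_, ?_⟩
    · -- in P
      have hB : (h * n⁻¹) * x' * (h * n⁻¹)⁻¹ ∈ P := by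
        -- rederive claimB here (scope)
        have hv : x * x' * x⁻¹ ∈ P := mul_mem (mul_mem hx hx') (inv_mem hx)
        have hvK : x * x' * x⁻¹ ∈ K := hPK hv
        have := (key _ hvK).mp hv
        rw [memPh] at this
        have e : h * ((g : G)⁻¹ * (x * x' * x⁻¹) * (g : G)) * h⁻¹
            = (h * n⁻¹) * x' * (h * n⁻¹)⁻¹ := by rw [← hxn]; group
        rwa [e] at this
      have e : ⁅h * n⁻¹, x'⁆ = ((h * n⁻¹) * x' * (h * n⁻¹)⁻¹) * x'⁻¹ := by
        rw [commutatorElement_def]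
      rw [e]
      exact mul_mem hB (inv_mem hx')
    · -- in N
      have h1 : ((⁅h * n⁻¹, x'⁆ : G) : G ⧸ N) = 1 := by
        have e1 : ((h * n⁻¹ : G) : G ⧸ N) = ((h : G) : G ⧸ N) := by
          rw [QuotientGroup.eq]
          have e : (h * n⁻¹)⁻¹ * h = n := by group
          rw [e]; exact hn
        rw [show ((⁅h * n⁻¹, x'⁆ : G) : G ⧸ N) = ⁅((h * n⁻¹ : G) : G ⧸ N), ((x' : G) : G ⧸ N)⁆ from
          map_commutatorElement (QuotientGroup.mk' N) _ _]
        rw [e1, show ⁅((h : G) : G ⧸ N), ((x' : G) : G ⧸ N)⁆ = ((⁅h, x'⁆ : G) : G ⧸ N) from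
          (map_commutatorElement (QuotientGroup.mk' N) _ _).symm]
        exact (QuotientGroup.eq_one_iff _).mpr (hcent x' hx')
      exact (QuotientGroup.eq_one_iff _).mp h1
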